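/- Fix a real number n. The map φ sending (a,b,c) to (n+a, n+a+b−c, n+b) is a bijection from the set {(a,b,c) ∈ ℝ³ : (n+a+b+c)² = 2(n²+a²+b²+c²), n+a ≥ 0, n+b ≥ 0} to the set {(A,B,C) ∈ ℝ³ : A ≥ 0, C ≥ 0, 4n² + B² − 4AC = 0}, with inverse θ sending (A,B,C) to (A−n, C−n, A+C−B−n). Moreover, when n is an integer and (a,b,c) ∈ ℤ³, one has gcd(n,a,b,c) = 1 if and only if gcd(n, n+a, n+a+b−c, n+b) = 1. -/

import Mathlib

/-- The set of `(a,b,c)` for which `(n,a,b,c)` is a Descartes quadruple with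
`n + a ≥ 0`, `n + b ≥ 0`. -/
def DescSet (n : ℝ) : Set (ℝ × ℝ × ℝ) :=
  {p | (n + p.1 + p.2.1 + p.2.2) ^ 2 = 2 * (n ^ 2 + p.1 ^ 2 + p.2.1 ^ 2 + p.2.2 ^ 2) ∧
    0 ≤ n + p.1 ∧ 0 ≤ n + p.2.1}

/-- The set of `(A,B,C)` for which `[n,A,B,C]` is a BQF quadruple: `[A,B,C]` is a
positive semidefinite form of discriminant `−4n²`. -/
def BQFSet (n : ℝ) : Set (ℝ × ℝ × ℝ) :=
  {P | 0 ≤ P.1 ∧ 0 ≤ P.2.2 ∧ 4 * n ^ 2 + P.2.1 ^ 2 - 4 * P.1 * P.2.2 = 0}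

/-- The map `φ : (a,b,c) ↦ (n+a, n+a+b−c, n+b)`. -/
def phi (n : ℝ) (p : ℝ × ℝ × ℝ) : ℝ × ℝ × ℝ :=
  (n + p.1, n + p.1 + p.2.1 - p.2.2, n + p.2.1)

/-- The map `θ : (A,B,C) ↦ (A−n, C−n, A+C−B−n)`. -/
def theta (n : ℝ) (P : ℝ × ℝ × ℝ) : ℝ × ℝ × ℝ :=
  (P.1 - n, P.2.2 - n, P.1 + P.2.2 - P.2.1 - n)

lemma gcd_eq (m a b c : ℤ) :
    Int.gcd (Int.gcd (Int.gcd m a : ℤ) b : ℤ) c =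
    Int.gcd (Int.gcd (Int.gcd m (m + a) : ℤ) (m + a + b - c) : ℤ) (m + b) := by
  apply Nat.dvd_antisymm
  · rw [← Int.natCast_dvd_natCast]
    set g : ℤ := (Int.gcd (Int.gcd (Int.gcd m a : ℤ) b : ℤ) c : ℤ)
    have hm : g ∣ m := (Int.gcd_dvd_left _ _).trans ((Int.gcd_dvd_left _ _).trans (Int.gcd_dvd_left _ _))
    have ha : g ∣ a := (Int.gcd_dvd_left _ _).trans ((Int.gcd_dvd_left _ _).trans (Int.gcd_dvd_right _ _))
    have hb : g ∣ b := (Int.gcd_dvd_left _ _).trans (Int.gcd_dvd_right _ _)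
    have hc : g ∣ c := Int.gcd_dvd_right _ _
    exact Int.dvd_coe_gcd (Int.dvd_coe_gcd (Int.dvd_coe_gcd hm (hm.add ha))
      (((hm.add ha).add hb).sub hc)) (hm.add hb)
  · rw [← Int.natCast_dvd_natCast]
    set g : ℤ := (Int.gcd (Int.gcd (Int.gcd m (m + a) : ℤ) (m + a + b - c) : ℤ) (m + b) : ℤ)
    have hm : g ∣ m := (Int.gcd_dvd_left _ _).trans ((Int.gcd_dvd_left _ _).trans (Int.gcd_dvd_left _ _))
    have hma : g ∣ m + a := (Int.gcd_dvd_left _ _).trans ((Int.gcd_dvd_left _ _).trans (Int.gcd_dvd_right _ _))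
    have hx : g ∣ m + a + b - c := (Int.gcd_dvd_left _ _).trans (Int.gcd_dvd_right _ _)
    have hmb : g ∣ m + b := Int.gcd_dvd_right _ _
    have ha : g ∣ a := by have := hma.sub hm; simpa using this
    have hb : g ∣ b := by have := hmb.sub hm; simpa using this
    have hc : g ∣ c := by
      have := ((hm.add ha).add hb).sub hx; simpa using this
    exact Int.dvd_coe_gcd (Int.dvd_coe_gcd (Int.dvd_coe_gcd hm ha) hb) hc

/-- `φ` is a bijection from Descartes triples to BQF triples, with inverse `θ`;
moreover, in the integral case, primitivity is preserved. -/
theorem descartes_bqf_bijection (n : ℝ) :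
    Set.BijOn (phi n) (DescSet n) (BQFSet n) ∧
    Set.InvOn (theta n) (phi n) (DescSet n) (BQFSet n) ∧
    (∀ m a b c : ℤ,
      Int.gcd (Int.gcd (Int.gcd m a : ℤ) b : ℤ) c = 1 ↔
      Int.gcd (Int.gcd (Int.gcd m (m + a) : ℤ) (m + a + b - c) : ℤ) (m + b) = 1) := by
  have hmaps : Set.MapsTo (phi n) (DescSet n) (BQFSet n) := by
    rintro ⟨a, b, c⟩ ⟨heq, h1, h2⟩
    exact ⟨h1, h2, by simp only [phi]; nlinarith [heq]⟩
  have hmaps' : Set.MapsTo (theta n) (BQFSet n) (DescSet n) := by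
    rintro ⟨A, B, C⟩ ⟨h1, h2, heq⟩
    refine ⟨?_, by simpa [theta] using h1, by simpa [theta] using h2⟩
    simp only [theta]
    nlinarith [heq]
  have hleft : Set.LeftInvOn (theta n) (phi n) (DescSet n) := by
    rintro ⟨a, b, c⟩ _
    simp [phi, theta]; ring
  have hright : Set.RightInvOn (theta n) (phi n) (BQFSet n) := by
    rintro ⟨A, B, C⟩ _
    simp [phi, theta]; ring
  refine ⟨⟨hmaps, hleft.injOn, fun P hP => ⟨theta n P, hmaps' hP, hright hP⟩⟩,
    ⟨hleft, hright⟩, fun m a b c => by rw [gcd_eq]⟩
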